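/- Let d : ℝ^{MN} → ℝ be Lipschitz continuous and ℤ^{MN}-periodic, and suppose that for every constant vector B(α) in a family {B(α) : α ∈ A} one has ⟨B(α), ∇d(ȳ)⟩ = 0 at almost every ȳ. If the set ⋃_{α(·),t≥0} {ȳ + ∫₀ᵗ B(α(s)) ds} of reachable points from any ȳ is dense in T^{MN}, then d is constant. -/

import Mathlib

open MeasureTheory intervalIntegral

lemma aux_translate {n : ℕ} {d : (Fin n → ℝ) → ℝ} {K : NNReal} (hLip : LipschitzWith K d)
    {v : Fin n → ℝ}
    (hv : ∀ᵐ y ∂(volume : Measure (Fin n → ℝ)), DifferentiableAt ℝ d y ∧ fderiv ℝ d y v = 0)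
    (r : ℝ) (x : Fin n → ℝ) : d (x + r • v) = d x := by
  have hd : Continuous d := hLip.continuous
  have hfc : Continuous (fun z : Fin n → ℝ => d (z + r • v) - d z) :=
    (hd.comp (continuous_id.add continuous_const)).sub hd
  have hae : ∀ᵐ z ∂(volume : Measure (Fin n → ℝ)), d (z + r • v) - d z = 0 := by
    apply ae_eq_zero_of_integral_contDiff_smul_eq_zero
      (hfc.locallyIntegrable)
    intro g hg hgsupp
    have hgc : Continuous g := hg.continuous
    -- integrability of z ↦ g z * d (z + ρ • v) for each ρ
    have hint : ∀ ρ : ℝ, Integrable (fun z : Fin n → ℝ => g z * d (z + ρ • v)) volume := by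
      intro ρ
      exact (hgc.mul (hd.comp (continuous_id.add continuous_const))).integrable_of_hasCompactSupport
        (hgsupp.mul_right)
    set I : ℝ → ℝ := fun ρ => ∫ z, g z * d (z + ρ • v) with hI
    have hIderiv : ∀ ρ, HasDerivAt I 0 ρ := by
      intro ρ
      rw [hasDerivAt_iff_tendsto_slope]
      rw [Filter.tendsto_iff_seq_tendsto]
      intro u hu
      have hu' : Filter.Tendsto u Filter.atTop (nhds ρ) :=
        hu.mono_right nhdsWithin_le_nhds
      -- pointwise limit a.e.
      have htrans : ∀ᵐ z ∂(volume : Measure (Fin n → ℝ)),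
          DifferentiableAt ℝ d (z + ρ • v) ∧ fderiv ℝ d (z + ρ • v) v = 0 :=
        (measurePreserving_add_right volume (ρ • v)).quasiMeasurePreserving.ae hv
      have hlim : ∀ᵐ z ∂(volume : Measure (Fin n → ℝ)),
          Filter.Tendsto (fun m : ℕ => (u m - ρ)⁻¹ *
            (g z * d (z + u m • v) - g z * d (z + ρ • v))) Filter.atTop (nhds 0) := by
        filter_upwards [htrans] with z hz
        have hc : HasDerivAt (fun τ : ℝ => z + τ • v) v ρ := by
          simpa using ((hasDerivAt_id ρ).smul_const v).const_add z
        have hθ : HasDerivAt (fun τ : ℝ => g z * d (z + τ • v)) (g z * (fderiv ℝ d (z + ρ • v) v)) ρ :=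
          (hz.1.hasFDerivAt.comp_hasDerivAt ρ hc).const_mul (g z)
        rw [hz.2, mul_zero] at hθ
        have := (hasDerivAt_iff_tendsto_slope.mp hθ).comp hu
        simpa [Function.comp_def, slope_def_field, slope, vsub_eq_sub, div_eq_inv_mul] using this
      -- dominated convergence
      have hbound : ∀ (m : ℕ), ∀ᵐ z ∂(volume : Measure (Fin n → ℝ)),
          ‖(u m - ρ)⁻¹ * (g z * d (z + u m • v) - g z * d (z + ρ • v))‖
            ≤ ‖g z‖ * ((K : ℝ) * ‖v‖) := by
        intro m
        refine Filter.Eventually.of_forall (fun z => ?_)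
        have h1 : ‖d (z + u m • v) - d (z + ρ • v)‖ ≤ (K : ℝ) * (‖v‖ * ‖u m - ρ‖) := by
          have := hLip.dist_le_mul (z + u m • v) (z + ρ • v)
          rw [dist_eq_norm, dist_eq_norm] at this
          have he : (z + u m • v) - (z + ρ • v) = (u m - ρ) • v := by
            rw [sub_smul]; abel
          rw [he, norm_smul] at this
          calc ‖d (z + u m • v) - d (z + ρ • v)‖ ≤ (K : ℝ) * (‖u m - ρ‖ * ‖v‖) := by
                simpa [Real.norm_eq_abs] using this
            _ = (K : ℝ) * (‖v‖ * ‖u m - ρ‖) := by ring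
        have : g z * d (z + u m • v) - g z * d (z + ρ • v)
            = g z * (d (z + u m • v) - d (z + ρ • v)) := by ring
        rw [this, norm_mul, norm_mul]
        rcases eq_or_ne (u m) ρ with h | h
        · simp only [h, sub_self, norm_zero, inv_zero, mul_zero, zero_mul]
          positivity
        · have hne : ‖u m - ρ‖ ≠ 0 := by simpa [sub_eq_zero] using h
          calc ‖(u m - ρ)⁻¹‖ * (‖g z‖ * ‖d (z + u m • v) - d (z + ρ • v)‖)
              ≤ ‖(u m - ρ)⁻¹‖ * (‖g z‖ * ((K:ℝ) * (‖v‖ * ‖u m - ρ‖))) := by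
                have := h1
                gcongr
            _ = ‖g z‖ * ((K:ℝ) * ‖v‖) * (‖(u m - ρ)⁻¹‖ * ‖u m - ρ‖) := by ring
            _ = ‖g z‖ * ((K:ℝ) * ‖v‖) := by
                rw [norm_inv, inv_mul_cancel₀ hne, mul_one]
      have hbint : Integrable (fun z : Fin n → ℝ => ‖g z‖ * ((K : ℝ) * ‖v‖)) volume :=
        ((hgc.integrable_of_hasCompactSupport hgsupp).norm.mul_const _)
      have hmeas : ∀ m : ℕ, AEStronglyMeasurable
          (fun z : Fin n → ℝ => (u m - ρ)⁻¹ * (g z * d (z + u m • v) - g z * d (z + ρ • v)))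
          volume := by
        intro m
        exact (continuous_const.mul ((hgc.mul (hd.comp (continuous_id.add continuous_const))).sub
          (hgc.mul (hd.comp (continuous_id.add continuous_const))))).aestronglyMeasurable
      have key := tendsto_integral_of_dominated_convergence _ hmeas hbint hbound hlim
      simp only [MeasureTheory.integral_zero] at key
      -- identify integrals with slopes of I
      convert key using 2 with m
      rw [Function.comp_apply, slope_def_field, div_eq_inv_mul, hI]
      rw [← MeasureTheory.integral_sub (hint (u m)) (hint ρ),
        ← MeasureTheory.integral_const_mul]
    -- I is constant
    have hconst : I r = I 0 :=
      is_const_of_deriv_eq_zero (fun ρ => (hIderiv ρ).differentiableAt)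
        (fun ρ => (hIderiv ρ).deriv) r 0
    have h0 : (fun z : Fin n → ℝ => g z * d (z + (0:ℝ) • v)) = fun z => g z * d z := by
      funext z; simp
    have hint0 : Integrable (fun z : Fin n → ℝ => g z * d z) volume := by
      have := hint 0; rwa [h0] at this
    have hre : (fun x : Fin n → ℝ => g x • (d (x + r • v) - d x))
        = fun x => g x * d (x + r • v) - g x * d x := by
      funext x; simp [smul_eq_mul, mul_sub]
    rw [hre, MeasureTheory.integral_sub (hint r) hint0]
    have hI0 : I 0 = ∫ z, g z * d z := by rw [hI]; exact congrArg _ h0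
    have hIr : I r = ∫ z, g z * d (z + r • v) := rfl
    rw [← hIr, ← hI0, hconst, sub_self]
  have hzero : (fun z : Fin n → ℝ => d (z + r • v) - d z) = fun _ => 0 :=
    (Continuous.ae_eq_iff_eq volume hfc continuous_const).mp hae
  have := congrFun hzero x
  simpa [sub_eq_zero] using this


/-- Step 2 of Theorem 4.5: a Lipschitz, `ℤ^{MN}`-periodic function `d` whose gradient is
a.e. orthogonal to every drift vector `B(α)` is constant along controlled trajectories;
if the reachable set from every point is dense in the torus, then `d` is constant. -/
theorem lipschitz_periodic_invariant_dense_reachable_constant (M N : ℕ)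
    (A : Type*) [MetricSpace A] [CompactSpace A] [MeasurableSpace A] [BorelSpace A]
    (B : A → (Fin (M * N) → ℝ)) (hB : Continuous B)
    (d : (Fin (M * N) → ℝ) → ℝ) (K : NNReal) (hLip : LipschitzWith K d)
    (hper : ∀ (x : Fin (M * N) → ℝ) (k : Fin (M * N) → ℤ),
      d (x + fun i => (k i : ℝ)) = d x)
    (hgrad : ∀ α : A, ∀ᵐ y ∂(volume : Measure (Fin (M * N) → ℝ)),
      DifferentiableAt ℝ d y ∧ fderiv ℝ d y (B α) = 0)
    (hdense : ∀ ybar : Fin (M * N) → ℝ, Dense {y : Fin (M * N) → ℝ |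
      ∃ (α : ℝ → A) (t : ℝ), Measurable α ∧ 0 ≤ t ∧
        y = ybar + ∫ s in (0 : ℝ)..t, B (α s)}) :
    ∀ y y', d y = d y' := by
  intro y y'
  have hd : Continuous d := hLip.continuous
  -- the set U of "period directions"
  set U : Set (Fin (M * N) → ℝ) :=
    {w | ∀ (τ : ℝ) (x : Fin (M * N) → ℝ), d (x + τ • w) = d x} with hU
  have hUconv : Convex ℝ U := by
    intro w₁ h₁ w₂ h₂ a b ha hb hab
    intro τ x
    have : x + τ • (a • w₁ + b • w₂) = (x + (τ * a) • w₁) + (τ * b) • w₂ := by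
      rw [smul_add, smul_smul, smul_smul]; abel
    rw [this, h₂ (τ * b) _, h₁ (τ * a) x]
  have hUB : Set.range B ⊆ U := by
    rintro _ ⟨α, rfl⟩ τ x
    exact aux_translate hLip (hgrad α) τ x
  have hUhull : convexHull ℝ (Set.range B) ⊆ U := convexHull_min hUB hUconv
  have hUclosed : IsClosed U := by
    have : U = ⋂ (τ : ℝ), ⋂ (x : Fin (M * N) → ℝ), {w | d (x + τ • w) = d x} := by
      ext w; simp [hU, Set.mem_iInter]
    rw [this]
    exact isClosed_iInter fun τ => isClosed_iInter fun x =>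
      isClosed_eq (hd.comp (continuous_const.add (continuous_const_smul τ))) continuous_const
  have hUhull' : closure (convexHull ℝ (Set.range B)) ⊆ U :=
    closure_minimal hUhull hUclosed
  -- d is constant on the reachable set from y
  have key : ∀ p ∈ {p : Fin (M * N) → ℝ |
      ∃ (α : ℝ → A) (t : ℝ), Measurable α ∧ 0 ≤ t ∧
        p = y + ∫ s in (0 : ℝ)..t, B (α s)}, d p = d y := by
    rintro p ⟨α, t, hα, ht, rfl⟩
    rcases eq_or_lt_of_le ht with h0 | h0
    · simp [← h0]
    -- t > 0
    have hμ : (volume : Measure ℝ) (Set.Ioc (0:ℝ) t) = ENNReal.ofReal t := by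
      simp [Real.volume_Ioc]
    obtain ⟨C, hC⟩ : ∃ C, ∀ w ∈ Set.range B, ‖w‖ ≤ C :=
      (isCompact_range hB).isBounded.exists_norm_le
    have hmeas : Measurable fun s : ℝ => B (α s) := hB.measurable.comp hα
    have hintOn : IntegrableOn (fun s : ℝ => B (α s)) (Set.Ioc 0 t) volume := by
      have hconst : IntegrableOn (fun _ : ℝ => C) (Set.Ioc 0 t) volume := by
        exact integrableOn_const (by rw [hμ]; exact ENNReal.ofReal_ne_top)
      exact Integrable.mono' hconst hmeas.aestronglyMeasurable
        (Filter.Eventually.of_forall fun s => hC _ ⟨α s, rfl⟩)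
    have hEq : (∫ s in (0:ℝ)..t, B (α s)) = ∫ s in Set.Ioc (0:ℝ) t, B (α s) :=
      intervalIntegral.integral_of_le ht
    -- the average lies in the convex hull
    haveI : IsFiniteMeasure ((volume : Measure ℝ).restrict (Set.Ioc 0 t)) := by
      constructor
      rw [Measure.restrict_apply_univ, hμ]
      exact ENNReal.ofReal_lt_top
    haveI : NeZero ((volume : Measure ℝ).restrict (Set.Ioc 0 t)) := by
      constructor
      intro h
      have := congrArg (fun μ : Measure ℝ => μ Set.univ) h
      simp [Measure.restrict_apply_univ, hμ, ENNReal.ofReal_eq_zero, not_le.mpr h0] at this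
    have havg : (⨍ s in Set.Ioc (0:ℝ) t, B (α s)) ∈ closure (convexHull ℝ (Set.range B)) := by
      apply Convex.set_average_mem_closure (convex_convexHull ℝ _)
      · rw [hμ]; simp [ENNReal.ofReal_eq_zero, not_le.mpr h0]
      · rw [hμ]; exact ENNReal.ofReal_ne_top
      · exact Filter.Eventually.of_forall fun s =>
          subset_convexHull ℝ _ ⟨α s, rfl⟩
      · exact hintOn
    have hrel : (∫ s in Set.Ioc (0:ℝ) t, B (α s))
        = t • ⨍ s in Set.Ioc (0:ℝ) t, B (α s) := by
      rw [average_eq, smul_smul, measureReal_restrict_apply_univ, measureReal_def, hμ,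
        ENNReal.toReal_ofReal ht, mul_inv_cancel₀ (ne_of_gt h0), one_smul]
    rw [hEq, hrel]
    exact hUhull' havg t y
  -- density and continuity conclude
  have hclosed : IsClosed {p : Fin (M * N) → ℝ | d p = d y} :=
    isClosed_eq hd continuous_const
  have hsub : {p : Fin (M * N) → ℝ |
      ∃ (α : ℝ → A) (t : ℝ), Measurable α ∧ 0 ≤ t ∧
        p = y + ∫ s in (0 : ℝ)..t, B (α s)} ⊆ {p | d p = d y} := key
  have : closure {p : Fin (M * N) → ℝ |
      ∃ (α : ℝ → A) (t : ℝ), Measurable α ∧ 0 ≤ t ∧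
        p = y + ∫ s in (0 : ℝ)..t, B (α s)} ⊆ {p | d p = d y} :=
    hclosed.closure_subset_iff.mpr hsub
  have hy' : y' ∈ {p : Fin (M * N) → ℝ | d p = d y} := by
    apply this
    rw [(hdense y).closure_eq]
    trivial
  exact (hy' : d y' = d y).symm
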